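/- arXiv:2508.12476 — 5 statements merged into one kernel-verified Lean document; each statement's English description precedes it below -/
import Mathlib

section
/- Let A be the 4th-order 2-dimensional tensor with entries a_{11 1̄1̄} = a_{22 2̄2̄} = 1, a_{11 2̄2̄} = a_{22 1̄1̄} = 2 and all other entries zero. Then for every nonzero x = (x₁,x₂) ∈ ℝ², x₁⁴ + 4 x₁² x₂² + x₂⁴ > 0, but for x = (i, 1) ∈ ℂ², the value |x₁|⁴ + 2 x₁² conj(x₂)² + 2 x₂² conj(x₁)² + |x₂|⁴ equals −2 < 0. Hence A is positive definite over ℝ but not Hermitian positive definite. -/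
open Complex Finset

/-- The conjugate polynomial associated to a `2m`-th order `n`-dimensional complex tensor. -/
noncomputable def fpoly {n m : ℕ} (A : (Fin m → Fin n) → (Fin m → Fin n) → ℂ)
    (x : Fin n → ℂ) : ℂ :=
  ∑ i : Fin m → Fin n, ∑ j : Fin m → Fin n,
    A i j * (∏ k, x (i k)) * ∏ k, (starRingEnd ℂ) (x (j k))

/-- Hermitian condition for a `2m`-th order tensor. -/
def IsHermitianTensor {n m : ℕ} (A : (Fin m → Fin n) → (Fin m → Fin n) → ℂ) : Prop :=
  ∀ i j, (starRingEnd ℂ) (A i j) = A j i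

/-- Conjugate partial-symmetric tensor. -/
def IsCPS {n m : ℕ} (A : (Fin m → Fin n) → (Fin m → Fin n) → ℂ) : Prop :=
  IsHermitianTensor A ∧
    ∀ (i j : Fin m → Fin n) (σ τ : Equiv.Perm (Fin m)), A (i ∘ σ) (j ∘ τ) = A i j

/-- `λ` is an `Ĥ`-eigenvalue of the `2(m+1)`-th order tensor `A` with eigenvector `x`. -/
noncomputable def IsHhatEigenpair {n m : ℕ}
    (A : (Fin (m+1) → Fin n) → (Fin (m+1) → Fin n) → ℂ)
    (lam : ℂ) (x : Fin n → ℂ) : Prop :=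
  x ≠ 0 ∧ ∀ p : Fin n,
    (∑ i : Fin m → Fin n, ∑ j : Fin (m+1) → Fin n,
      A (Fin.cons p i) j * (∏ k, x (i k)) * ∏ k, (starRingEnd ℂ) (x (j k)))
    = lam * (starRingEnd ℂ) (x p) * (((‖x p‖ : ℝ) : ℂ)) ^ (2*m)

/-- Diagonal entry `a_{p...p p̄...p̄}`. -/
noncomputable def diagEntry {n m : ℕ}
    (A : (Fin m → Fin n) → (Fin m → Fin n) → ℂ) (p : Fin n) : ℂ :=
  A (fun _ => p) (fun _ => p)

/-- `r_p(A)`: sum of moduli of the off-diagonal entries of the `p`-th slice. -/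
noncomputable def rOff {n m : ℕ}
    (A : (Fin (m+1) → Fin n) → (Fin (m+1) → Fin n) → ℂ) (p : Fin n) : ℝ :=
  ∑ i : Fin m → Fin n, ∑ j : Fin (m+1) → Fin n,
    if i = (fun _ => p) ∧ j = (fun _ => p) then 0
    else ‖A (Fin.cons p i) j‖

/-- `r'_p(A)`: sum over tuples in which no index equals `p`. -/
noncomputable def rPrime {n m : ℕ}
    (A : (Fin (m+1) → Fin n) → (Fin (m+1) → Fin n) → ℂ) (p : Fin n) : ℝ :=
  ∑ i : Fin m → Fin n, ∑ j : Fin (m+1) → Fin n,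
    if (∀ k, i k ≠ p) ∧ (∀ k, j k ≠ p) then ‖A (Fin.cons p i) j‖ else 0

/-- `r̂_p(A) = r_p(A) - r'_p(A)`. -/
noncomputable def rHat {n m : ℕ}
    (A : (Fin (m+1) → Fin n) → (Fin (m+1) → Fin n) → ℂ) (p : Fin n) : ℝ :=
  rOff A p - rPrime A p

/-- Entry `a_{p q...q q̄...q̄}`. -/
noncomputable def aSlice {n m : ℕ}
    (A : (Fin (m+1) → Fin n) → (Fin (m+1) → Fin n) → ℂ) (p q : Fin n) : ℂ :=
  A (Fin.cons p (fun _ => q)) (fun _ => q)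

/-- `r_p^q(A) = r_p(A) - |a_{p q...q q̄...q̄}|`. -/
noncomputable def rOffSub {n m : ℕ}
    (A : (Fin (m+1) → Fin n) → (Fin (m+1) → Fin n) → ℂ) (p q : Fin n) : ℝ :=
  rOff A p - ‖aSlice A p q‖

/-- Hermitian positive definiteness. -/
def HermitianPD {n m : ℕ} (A : (Fin m → Fin n) → (Fin m → Fin n) → ℂ) : Prop :=
  ∀ x : Fin n → ℂ, x ≠ 0 → ∃ r : ℝ, fpoly A x = r ∧ 0 < r

/-- Hermitian positive semidefiniteness. -/
def HermitianPSD {n m : ℕ} (A : (Fin m → Fin n) → (Fin m → Fin n) → ℂ) : Prop :=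
  ∀ x : Fin n → ℂ, ∃ r : ℝ, fpoly A x = r ∧ 0 ≤ r

/-- The tensor with a_{111̄1̄} = a_{222̄2̄} = 1, a_{112̄2̄} = a_{221̄1̄} = 2, and zero otherwise. -/
noncomputable def exampleTensorA : (Fin 2 → Fin 2) → (Fin 2 → Fin 2) → ℂ := fun i j =>
  if i = ![0, 0] ∧ j = ![0, 0] then 1
  else if i = ![1, 1] ∧ j = ![1, 1] then 1
  else if i = ![0, 0] ∧ j = ![1, 1] then 2
  else if i = ![1, 1] ∧ j = ![0, 0] then 2
  else 0

lemma sum_fin2fun (f : (Fin 2 → Fin 2) → ℂ) :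
    ∑ i, f i = f ![0,0] + f ![0,1] + f ![1,0] + f ![1,1] := by
  have h : (univ : Finset (Fin 2 → Fin 2)) = {![0,0], ![0,1], ![1,0], ![1,1]} := by decide
  rw [h]
  rw [Finset.sum_insert (by decide), Finset.sum_insert (by decide),
    Finset.sum_insert (by decide), Finset.sum_singleton]
  ring

lemma fpoly_example (x : Fin 2 → ℂ) :
    fpoly exampleTensorA x =
      (x 0)^2 * ((starRingEnd ℂ) (x 0))^2 + 2 * (x 0)^2 * ((starRingEnd ℂ) (x 1))^2
        + 2 * (x 1)^2 * ((starRingEnd ℂ) (x 0))^2 + (x 1)^2 * ((starRingEnd ℂ) (x 1))^2 := by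
  rw [fpoly, sum_fin2fun]
  rw [sum_fin2fun, sum_fin2fun, sum_fin2fun, sum_fin2fun]
  simp (config := { decide := true }) [exampleTensorA, Fin.prod_univ_two]
  ring

theorem pd_over_R_but_not_hermitianPD :
    (∀ x : Fin 2 → ℝ, x ≠ 0 → 0 < (x 0)^4 + 4 * (x 0)^2 * (x 1)^2 + (x 1)^4) ∧
    (((‖Complex.I‖ : ℝ) : ℂ)^4 + 2 * Complex.I^2 * ((starRingEnd ℂ) 1)^2
        + 2 * (1 : ℂ)^2 * ((starRingEnd ℂ) Complex.I)^2 + ((‖(1 : ℂ)‖ : ℝ) : ℂ)^4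
      = -2) ∧
    (∀ x : Fin 2 → ℝ, x ≠ 0 →
        ∃ r : ℝ, fpoly exampleTensorA (fun k => (x k : ℂ)) = (r : ℂ) ∧ 0 < r) ∧
    ¬ HermitianPD exampleTensorA := by
  
  have hpos : ∀ x : Fin 2 → ℝ, x ≠ 0 → 0 < (x 0)^4 + 4 * (x 0)^2 * (x 1)^2 + (x 1)^4 := by
    intro x hx
    have h : x 0 ≠ 0 ∨ x 1 ≠ 0 := by
      by_contra h
      push_neg at h
      apply hx
      funext k
      fin_cases k <;> simp [h.1, h.2]
    rcases h with h | h
    · have h0 : 0 < (x 0)^2 := by positivity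
      nlinarith [sq_nonneg (x 1), sq_nonneg (x 0 * x 1), sq_nonneg ((x 0)^2), sq_nonneg ((x 1)^2)]
    · have h0 : 0 < (x 1)^2 := by positivity
      nlinarith [sq_nonneg (x 0), sq_nonneg (x 0 * x 1), sq_nonneg ((x 0)^2), sq_nonneg ((x 1)^2)]
  refine ⟨hpos, ?_, ?_, ?_⟩
  · simp [Complex.conj_I, Complex.I_sq]
    ring
  · intro x hx
    refine ⟨(x 0)^4 + 4 * (x 0)^2 * (x 1)^2 + (x 1)^4, ?_, hpos x hx⟩
    rw [fpoly_example]
    simp only [Complex.conj_ofReal]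
    push_cast
    ring
  · intro h
    obtain ⟨r, hr, hrpos⟩ := h ![Complex.I, 1] (by
      intro h0
      have := congrFun h0 0
      simp at this)
    rw [fpoly_example] at hr
    simp [Complex.conj_I, Complex.I_sq] at hr
    have h2 : ((-2 : ℝ) : ℂ) = (r : ℂ) := by
      rw [← hr]; push_cast; ring
    have hr2 : r = -2 := by exact_mod_cast h2.symm
    linarith
end

section
/- Let A be a 2m-th order n-dimensional complex tensor and λ an Ĥ-eigenvalue of A. Then λ lies in the Geršgorin-type set K_ger(A) = ⋃_{i=1}^n { z ∈ ℂ : |z − a_{i...i ī...ī}| ≤ r_i(A) }, where r_i(A) = Σ_{(i₂...i_m j₁...j_m) ≠ (i...i)} |a_{i i₂...i_m j̄₁...j̄_m}|. -/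
open Complex Finset

theorem hhat_eigenvalue_in_gershgorin {n m : ℕ}
    (A : (Fin (m+1) → Fin n) → (Fin (m+1) → Fin n) → ℂ)
    (lam : ℂ) (x : Fin n → ℂ) (h : IsHhatEigenpair A lam x) :
    ∃ p : Fin n, ‖lam - diagEntry A p‖ ≤ rOff A p := by
  classical
  obtain ⟨hx, heq⟩ := h
  have hne : ∃ q, x q ≠ 0 := by
    by_contra hc
    push_neg at hc
    exact hx (funext hc)
  obtain ⟨q0, hq0⟩ := hne
  obtain ⟨p, -, hp⟩ := Finset.exists_max_image Finset.univ
    (fun q => ‖x q‖) ⟨q0, Finset.mem_univ q0⟩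
  refine ⟨p, ?_⟩
  have hMpos : 0 < ‖x p‖ :=
    lt_of_lt_of_le (norm_pos_iff.mpr hq0) (hp q0 (Finset.mem_univ q0))
  set M : ℝ := ‖x p‖ with hM
  set f : ((Fin m → Fin n) × (Fin (m+1) → Fin n)) → ℂ :=
    fun ij => A (Fin.cons p ij.1) ij.2 * (∏ k, x (ij.1 k)) *
      ∏ k, (starRingEnd ℂ) (x (ij.2 k)) with hf
  set dpair : ((Fin m → Fin n) × (Fin (m+1) → Fin n)) :=
    ((fun _ => p), (fun _ => p)) with hd
  have hsum : ∑ ij : ((Fin m → Fin n) × (Fin (m+1) → Fin n)), f ij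
      = lam * (starRingEnd ℂ) (x p) * ((M : ℂ)) ^ (2*m) := by
    rw [Fintype.sum_prod_type]
    exact heq p
  have h2 : ((M : ℂ)) ^ 2 = x p * (starRingEnd ℂ) (x p) := by
    rw [Complex.mul_conj, ← Complex.sq_norm]
    push_cast
    ring
  have habs : ((M : ℂ)) ^ (2*m) = (x p * (starRingEnd ℂ) (x p)) ^ m := by
    rw [pow_mul, h2]
  have hcons : Fin.cons p (fun _ : Fin m => p) = (fun _ : Fin (m+1) => p) :=
    funext fun k => Fin.cases rfl (fun _ => rfl) k
  have hfd : f dpair = diagEntry A p * (starRingEnd ℂ) (x p) * ((M : ℂ)) ^ (2*m) := by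
    simp only [hf, hd, diagEntry, habs]
    rw [Finset.prod_const, Finset.prod_const, Finset.card_fin, Finset.card_fin,
      mul_pow, hcons]
    ring
  have hsplit : (lam - diagEntry A p) * (starRingEnd ℂ) (x p) * ((M : ℂ)) ^ (2*m)
      = ∑ ij ∈ Finset.univ.erase dpair, f ij := by
    have := Finset.add_sum_erase Finset.univ f (Finset.mem_univ dpair)
    rw [hsum, hfd] at this
    linear_combination -this
  have hterm : ∀ ij : ((Fin m → Fin n) × (Fin (m+1) → Fin n)),
      ‖f ij‖ ≤ ‖A (Fin.cons p ij.1) ij.2‖ * (M ^ m * M ^ (m+1)) := by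
    intro ij
    rw [hf]
    simp only
    rw [norm_mul, norm_mul, norm_prod, norm_prod, mul_assoc]
    refine mul_le_mul_of_nonneg_left ?_ (norm_nonneg _)
    have h1 : ∏ k, ‖x (ij.1 k)‖ ≤ M ^ m := by
      calc ∏ k, ‖x (ij.1 k)‖ ≤ ∏ _k : Fin m, M :=
            Finset.prod_le_prod (fun k _ => norm_nonneg _)
              (fun k _ => hp _ (Finset.mem_univ _))
        _ = M ^ m := by rw [Finset.prod_const, Finset.card_fin]
    have h2' : ∏ k, ‖(starRingEnd ℂ) (x (ij.2 k))‖ ≤ M ^ (m+1) := by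
      calc ∏ k, ‖(starRingEnd ℂ) (x (ij.2 k))‖
          ≤ ∏ _k : Fin (m+1), M :=
            Finset.prod_le_prod (fun k _ => norm_nonneg _)
              (fun k _ => by rw [Complex.norm_conj]; exact hp _ (Finset.mem_univ _))
        _ = M ^ (m+1) := by rw [Finset.prod_const, Finset.card_fin]
    exact mul_le_mul h1 h2' (Finset.prod_nonneg fun k _ => norm_nonneg _)
      (pow_nonneg hMpos.le m)
  set g : ((Fin m → Fin n) × (Fin (m+1) → Fin n)) → ℝ := fun ij =>
    if ij.1 = (fun _ => p) ∧ ij.2 = (fun _ => p) then 0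
    else ‖A (Fin.cons p ij.1) ij.2‖ with hg
  have hrOff0 : rOff A p = ∑ ij : ((Fin m → Fin n) × (Fin (m+1) → Fin n)), g ij := by
    rw [rOff, hg, Fintype.sum_prod_type]
  have hrOff : rOff A p = ∑ ij ∈ Finset.univ.erase dpair,
      ‖A (Fin.cons p ij.1) ij.2‖ := by
    rw [hrOff0, ← Finset.sum_erase Finset.univ (f := g) (a := dpair) (by simp [hg, hd])]
    refine Finset.sum_congr rfl fun ij hij => ?_
    rw [hg]
    simp only
    rw [if_neg]
    intro ⟨h1, h2⟩
    exact (Finset.mem_erase.mp hij).1 (Prod.ext h1 h2)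
  have hchain : ‖lam - diagEntry A p‖ * (M ^ (2*m+1))
      ≤ rOff A p * (M ^ (2*m+1)) := by
    have hL : ‖(lam - diagEntry A p) * (starRingEnd ℂ) (x p) * ((M : ℂ)) ^ (2*m)‖
        = ‖lam - diagEntry A p‖ * (M ^ (2*m+1)) := by
      rw [norm_mul, norm_mul, Complex.norm_conj, norm_pow,
        Complex.norm_of_nonneg hMpos.le, ← hM]
      ring
    rw [← hL, hsplit]
    calc ‖∑ ij ∈ Finset.univ.erase dpair, f ij‖
        ≤ ∑ ij ∈ Finset.univ.erase dpair, ‖f ij‖ :=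
          norm_sum_le _ _
      _ ≤ ∑ ij ∈ Finset.univ.erase dpair,
            ‖A (Fin.cons p ij.1) ij.2‖ * (M ^ m * M ^ (m+1)) :=
          Finset.sum_le_sum fun ij _ => hterm ij
      _ = rOff A p * (M ^ (2*m+1)) := by
          rw [← Finset.sum_mul, hrOff]
          congr 1
          rw [← pow_add]
          congr 1
          omega
  exact le_of_mul_le_mul_right hchain (pow_pos hMpos _)
end

section
/- Let A be a 2m-th order n-dimensional complex tensor and λ an Ĥ-eigenvalue of A. Then there exist indices i ≠ j such that (|λ − a_{i...i ī...ī}| − r_i^j(A)) · |λ − a_{j...j j̄...j̄}| ≤ |a_{i j...j j̄...j̄}| · r_j(A), where r_i^j(A) = r_i(A) − |a_{i j...j j̄...j̄}| and r_i(A) is the sum of moduli of off-diagonal entries of the i-th slice. Hence σ_h(A) ⊆ K_llk(A). -/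
open Complex Finset

lemma dsplit {α β M : Type*} [Fintype α] [Fintype β] [DecidableEq α] [DecidableEq β]
    [AddCommMonoid M] (f : α → β → M) (i₀ : α) (j₀ : β) :
    ∑ i, ∑ j, f i j = f i₀ j₀ + ∑ i, ∑ j, if i = i₀ ∧ j = j₀ then 0 else f i j := by
  have h : ∀ i j, f i j =
      (if i = i₀ then (if j = j₀ then f i₀ j₀ else 0) else 0)
        + (if i = i₀ ∧ j = j₀ then 0 else f i j) := by
    intro i j
    by_cases hi : i = i₀ <;> by_cases hj : j = j₀ <;> simp [hi, hj]
  calc ∑ i, ∑ j, f i j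
      = ∑ i, ∑ j, ((if i = i₀ then (if j = j₀ then f i₀ j₀ else 0) else 0)
        + (if i = i₀ ∧ j = j₀ then 0 else f i j)) :=
        Finset.sum_congr rfl fun i _ => Finset.sum_congr rfl fun j _ => h i j
    _ = _ := by
        simp [Finset.sum_add_distrib, Finset.sum_ite_eq']

lemma cons_const {n m : ℕ} (p : Fin n) :
    (Fin.cons p (fun _ => p) : Fin (m+1) → Fin n) = fun _ => p :=
  funext fun k => Fin.cases rfl (fun _ => rfl) k

lemma pow_conj_eq (z : ℂ) (m : ℕ) :
    z ^ m * (starRingEnd ℂ z) ^ (m + 1) = starRingEnd ℂ z * ((‖z‖ : ℂ)) ^ (2 * m) := by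
  have h1 : z * starRingEnd ℂ z = ((‖z‖ : ℂ)) ^ 2 := by
    rw [Complex.mul_conj']
  calc z ^ m * (starRingEnd ℂ z) ^ (m + 1)
      = (z * starRingEnd ℂ z) ^ m * starRingEnd ℂ z := by ring
    _ = _ := by rw [h1, ← pow_mul]; ring

theorem hhat_eigenvalue_in_llk {n m : ℕ} (hn : 1 < n)
    (A : (Fin (m+1) → Fin n) → (Fin (m+1) → Fin n) → ℂ)
    (lam : ℂ) (x : Fin n → ℂ) (h : IsHhatEigenpair A lam x) :
    ∃ p q : Fin n, p ≠ q ∧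
      (‖lam - diagEntry A p‖ - rOffSub A p q) * ‖lam - diagEntry A q‖
        ≤ ‖aSlice A p q‖ * rOff A q := by
  obtain ⟨hx, heig⟩ := h
  have hn0 : 0 < n := by omega
  -- choose p with maximal |x p|
  obtain ⟨p, -, hp⟩ := Finset.exists_max_image (Finset.univ : Finset (Fin n))
    (fun k => ‖x k‖) ⟨⟨0, hn0⟩, Finset.mem_univ _⟩
  -- choose q with second maximal
  have hne : (Finset.univ.erase p).Nonempty := by
    rw [← Finset.card_pos, Finset.card_erase_of_mem (Finset.mem_univ p), Finset.card_univ,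
      Fintype.card_fin]
    omega
  obtain ⟨q, hqmem, hq⟩ := Finset.exists_max_image (Finset.univ.erase p)
    (fun k => ‖x k‖) hne
  have hqp : q ≠ p := (Finset.mem_erase.mp hqmem).1
  set M := ‖x p‖ with hM
  set N := ‖x q‖ with hN
  have hMk : ∀ k, ‖x k‖ ≤ M := fun k => hp k (Finset.mem_univ k)
  have hNk : ∀ k, k ≠ p → ‖x k‖ ≤ N := fun k hk =>
    hq k (Finset.mem_erase.mpr ⟨hk, Finset.mem_univ k⟩)
  have hM0 : 0 < M := by
    obtain ⟨k, hk⟩ := Function.ne_iff.mp hx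
    have : 0 < ‖x k‖ := by
      exact norm_pos_iff.mpr hk
    exact lt_of_lt_of_le this (hMk k)
  have hN0 : 0 ≤ N := norm_nonneg _
  -- term function
  set f : Fin n → (Fin m → Fin n) → (Fin (m+1) → Fin n) → ℂ :=
    fun r i j => A (Fin.cons r i) j * (∏ k, x (i k)) * ∏ k, (starRingEnd ℂ) (x (j k)) with hf
  -- slice identity
  have key : ∀ r : Fin n,
      (lam - diagEntry A r) * (starRingEnd ℂ) (x r) * ((‖x r‖ : ℂ)) ^ (2*m)
        = ∑ i, ∑ j, if i = (fun _ => r) ∧ j = (fun _ => r) then 0 else f r i j := by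
    intro r
    have hsplit := dsplit (f r) (fun _ => r) (fun _ => r)
    have hdiag : f r (fun _ => r) (fun _ => r)
        = diagEntry A r * (starRingEnd ℂ) (x r) * ((‖x r‖ : ℂ)) ^ (2*m) := by
      have : f r (fun _ => r) (fun _ => r)
          = diagEntry A r * ((x r) ^ m * (starRingEnd ℂ (x r)) ^ (m+1)) := by
        simp only [hf, cons_const, diagEntry]
        rw [Finset.prod_const, Finset.prod_const]
        simp [Finset.card_univ]
        ring
      rw [this, pow_conj_eq]
      ring
    have heq := heig r
    rw [hsplit, hdiag] at heq
    linear_combination -heq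
  -- bound on a single off term
  have habs_term : ∀ (r : Fin n) (i : Fin m → Fin n) (j : Fin (m+1) → Fin n),
      ‖f r i j‖ ≤ ‖A (Fin.cons r i) j‖ * M ^ (2*m+1) := by
    intro r i j
    have h1 : ‖f r i j‖ = ‖A (Fin.cons r i) j‖
        * (∏ k, ‖x (i k)‖) * ∏ k, ‖x (j k)‖ := by
      simp only [hf]
      rw [norm_mul, norm_mul, norm_prod, norm_prod]
      simp [Complex.norm_conj]
    rw [h1]
    have h2 : (∏ k, ‖x (i k)‖) ≤ M ^ m := by
      calc (∏ k : Fin m, ‖x (i k)‖) ≤ ∏ _k : Fin m, M :=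
        Finset.prod_le_prod (fun _ _ => norm_nonneg _) (fun k _ => hMk (i k))
      _ = M ^ m := by simp
    have h3 : (∏ k, ‖x (j k)‖) ≤ M ^ (m+1) := by
      calc (∏ k : Fin (m+1), ‖x (j k)‖) ≤ ∏ _k : Fin (m+1), M :=
        Finset.prod_le_prod (fun _ _ => norm_nonneg _) (fun k _ => hMk (j k))
      _ = M ^ (m+1) := by simp
    have h4 : M ^ m * M ^ (m+1) = M ^ (2*m+1) := by
      rw [← pow_add]; congr 1; omega
    calc ‖A (Fin.cons r i) j‖ * (∏ k, ‖x (i k)‖)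
          * ∏ k, ‖x (j k)‖
        ≤ ‖A (Fin.cons r i) j‖ * M ^ m * M ^ (m+1) := by
          have hA := norm_nonneg (A (Fin.cons r i) j)
          have hp2 : (0:ℝ) ≤ ∏ k, ‖x (i k)‖ :=
            Finset.prod_nonneg fun k _ => norm_nonneg _
          have hp3 : (0:ℝ) ≤ ∏ k, ‖x (j k)‖ :=
            Finset.prod_nonneg fun k _ => norm_nonneg _
          exact mul_le_mul (mul_le_mul_of_nonneg_left h2 hA) h3 hp3
            (mul_nonneg hA (pow_nonneg hM0.le m))
      _ = ‖A (Fin.cons r i) j‖ * M ^ (2*m+1) := by rw [mul_assoc, h4]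
  -- abs of LHS of key
  have habs_lhs : ∀ r : Fin n,
      ‖(lam - diagEntry A r) * (starRingEnd ℂ) (x r)
        * ((‖x r‖ : ℂ)) ^ (2*m)‖
      = ‖lam - diagEntry A r‖ * ‖x r‖ ^ (2*m+1) := by
    intro r
    rw [norm_mul, norm_mul, norm_pow, Complex.norm_conj, Complex.norm_real,
      norm_norm]
    ring
  -- inequality for slice q
  have ineq_q : ‖lam - diagEntry A q‖ * N ^ (2*m+1) ≤ rOff A q * M ^ (2*m+1) := by
    have := key q
    calc ‖lam - diagEntry A q‖ * N ^ (2*m+1)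
        = ‖∑ i, ∑ j, if i = (fun _ => q) ∧ j = (fun _ => q) then 0 else f q i j‖ := by
          rw [← this, habs_lhs q]
      _ ≤ ∑ i, ∑ j, ‖if i = (fun _ => q) ∧ j = (fun _ => q) then 0 else f q i j‖ :=
          (norm_sum_le _ _).trans (Finset.sum_le_sum fun i _ => norm_sum_le _ _)
      _ ≤ ∑ i, ∑ j, (if i = (fun _ => q) ∧ j = (fun _ => q) then 0
            else ‖A (Fin.cons q i) j‖) * M ^ (2*m+1) := by
          refine Finset.sum_le_sum fun i _ => Finset.sum_le_sum fun j _ => ?_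
          by_cases hc : i = (fun _ => q) ∧ j = (fun _ => q)
          · simp [hc]
          · simp only [if_neg hc]
            exact habs_term q i j
      _ = rOff A q * M ^ (2*m+1) := by
          rw [rOff, Finset.sum_mul]
          exact Finset.sum_congr rfl fun i _ => by rw [Finset.sum_mul]
  -- split off the (q,...,q) term in slice p
  set g : (Fin m → Fin n) → (Fin (m+1) → Fin n) → ℂ :=
    fun i j => if i = (fun _ => p) ∧ j = (fun _ => p) then 0 else f p i j with hg
  have hcond : ¬((fun _ : Fin m => q) = (fun _ => p) ∧ (fun _ : Fin (m+1) => q) = (fun _ => p)) := by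
    rintro ⟨-, h2⟩
    exact hqp (congrFun h2 0)
  have hgqq : g (fun _ => q) (fun _ => q)
      = aSlice A p q * ((x q) ^ m * (starRingEnd ℂ (x q)) ^ (m+1)) := by
    simp only [hg, if_neg hcond, hf, aSlice]
    rw [Finset.prod_const, Finset.prod_const]
    simp [Finset.card_univ]
    ring
  have habs_gqq : ‖g (fun _ => q) (fun _ => q)‖
      = ‖aSlice A p q‖ * N ^ (2*m+1) := by
    rw [hgqq, norm_mul, norm_mul, norm_pow, norm_pow, Complex.norm_conj]
    rw [show ‖x q‖ = N from rfl, ← pow_add,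
      show m + (m + 1) = 2 * m + 1 from by omega]
  -- rOffSub as a sum
  have hrsub : rOffSub A p q = ∑ i, ∑ j,
      if (i = (fun _ => p) ∧ j = (fun _ => p)) ∨ (i = (fun _ => q) ∧ j = (fun _ => q)) then 0
      else ‖A (Fin.cons p i) j‖ := by
    have hsp := dsplit (fun i j => if i = (fun _ => p) ∧ j = (fun _ => p) then (0:ℝ)
      else ‖A (Fin.cons p i) j‖) (fun _ => q) (fun _ => q)
    have h1 : rOff A p = ‖aSlice A p q‖ + ∑ i, ∑ j,
        (if (i = (fun _ => p) ∧ j = (fun _ => p)) ∨ (i = (fun _ => q) ∧ j = (fun _ => q)) then 0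
        else ‖A (Fin.cons p i) j‖) := by
      rw [rOff, hsp, if_neg hcond]
      refine congrArg₂ (· + ·) rfl ?_
      refine Finset.sum_congr rfl fun i _ => Finset.sum_congr rfl fun j _ => ?_
      by_cases hc1 : i = (fun _ => q) ∧ j = (fun _ => q) <;>
        by_cases hc2 : i = (fun _ => p) ∧ j = (fun _ => p) <;> simp [hc1, hc2]
    rw [rOffSub, h1]
    ring
  -- inequality for slice p
  have ineq_p : ‖lam - diagEntry A p‖ * M ^ (2*m+1)
      ≤ ‖aSlice A p q‖ * N ^ (2*m+1) + rOffSub A p q * M ^ (2*m+1) := by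
    have hkeyp := key p
    have hsplit2 := dsplit g (fun _ => q) (fun _ => q)
    calc ‖lam - diagEntry A p‖ * M ^ (2*m+1)
        = ‖g (fun _ => q) (fun _ => q)
            + ∑ i, ∑ j, if i = (fun _ => q) ∧ j = (fun _ => q) then 0 else g i j‖ := by
          rw [← hsplit2, ← hkeyp, habs_lhs p]
      _ ≤ ‖g (fun _ => q) (fun _ => q)‖
            + ‖∑ i, ∑ j, if i = (fun _ => q) ∧ j = (fun _ => q) then 0 else g i j‖ :=
          norm_add_le _ _
      _ ≤ ‖aSlice A p q‖ * N ^ (2*m+1)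
            + ∑ i, ∑ j, ‖if i = (fun _ => q) ∧ j = (fun _ => q) then 0 else g i j‖ := by
          rw [habs_gqq]
          exact add_le_add_right ((norm_sum_le _ _).trans
            (Finset.sum_le_sum fun i _ => norm_sum_le _ _)) _
      _ ≤ ‖aSlice A p q‖ * N ^ (2*m+1)
            + ∑ i, ∑ j, (if (i = (fun _ => p) ∧ j = (fun _ => p)) ∨ (i = (fun _ => q) ∧ j = (fun _ => q))
                then 0 else ‖A (Fin.cons p i) j‖) * M ^ (2*m+1) := by
          refine add_le_add_right (Finset.sum_le_sum fun i _ => Finset.sum_le_sum fun j _ => ?_) _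
          by_cases hc1 : i = (fun _ => q) ∧ j = (fun _ => q)
          · simp [hc1]
          by_cases hc2 : i = (fun _ => p) ∧ j = (fun _ => p)
          · simp [hc1, hc2, hg]
          · simp only [if_neg hc1, hg, if_neg hc2,
              if_neg (show ¬(_ ∨ _) from fun hh => hh.elim hc2 hc1)]
            exact habs_term p i j
      _ = ‖aSlice A p q‖ * N ^ (2*m+1) + rOffSub A p q * M ^ (2*m+1) := by
          rw [hrsub, Finset.sum_mul]
          congr 1
          exact Finset.sum_congr rfl fun i _ => by rw [Finset.sum_mul]
  -- final algebra
  refine ⟨p, q, hqp.symm, ?_⟩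
  have hR0 : 0 ≤ rOff A q := by
    refine Finset.sum_nonneg fun i _ => Finset.sum_nonneg fun j _ => ?_
    split
    · exact le_rfl
    · exact norm_nonneg _
  set D := ‖lam - diagEntry A p‖ - rOffSub A p q with hD
  set E := ‖lam - diagEntry A q‖ with hE
  set a := ‖aSlice A p q‖ with ha
  set R := rOff A q with hR
  have ha0 : 0 ≤ a := norm_nonneg _
  have hE0 : 0 ≤ E := norm_nonneg _
  by_cases hDle : D ≤ 0
  · exact le_trans (mul_nonpos_of_nonpos_of_nonneg hDle hE0) (mul_nonneg ha0 hR0)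
  push_neg at hDle
  have h1 : D * M ^ (2*m+1) ≤ a * N ^ (2*m+1) := by
    rw [hD, sub_mul]
    linarith [ineq_p]
  have h2 : E * N ^ (2*m+1) ≤ R * M ^ (2*m+1) := ineq_q
  have hMK : (0:ℝ) < M ^ (2*m+1) := pow_pos hM0 _
  have hN0' : 0 < N := by
    rcases lt_or_eq_of_le hN0 with hlt | heqN
    · exact hlt
    · exfalso
      have : N ^ (2*m+1) = 0 := by rw [← heqN]; simp
      rw [this, mul_zero] at h1
      nlinarith
  have hNK : (0:ℝ) < N ^ (2*m+1) := pow_pos hN0' _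
  have h3 : D * M ^ (2*m+1) * (E * N ^ (2*m+1)) ≤ a * N ^ (2*m+1) * (R * M ^ (2*m+1)) :=
    mul_le_mul h1 h2 (mul_nonneg hE0 hNK.le) (mul_nonneg ha0 hNK.le)
  nlinarith [h3, mul_pos hMK hNK]
end

section
/- Let A be a 2m-th order n-dimensional complex tensor and λ an Ĥ-eigenvalue of A. Then there exist indices t ≠ s such that (|λ − a_{t...tt̄...t̄}| − r̂_t(A)) · |λ − a_{s...ss̄...s̄}| ≤ r'_t(A) · r_s(A), where r'_t(A) is the sum of |a_{t i₂...i_m j̄₁...j̄_m}| over index tuples in which no index among i₂,...,i_m,j₁,...,j_m equals t, and r̂_t(A) = r_t(A) − r'_t(A). Hence σ_h(A) ⊆ K_ll(A). -/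
open Complex Finset

lemma sum_split {α β M : Type*} [Fintype α] [Fintype β] [DecidableEq α] [DecidableEq β]
    [AddCommGroup M] (f : α → β → M) (a : α) (b : β) :
    ∑ i, ∑ j, (if i = a ∧ j = b then 0 else f i j) = (∑ i, ∑ j, f i j) - f a b := by
  have h1 : ∀ (i : α) (j : β), (if i = a ∧ j = b then (0:M) else f i j)
      = f i j - (if j = b then (if i = a then f i j else 0) else 0) := by
    intro i j
    by_cases hi : i = a <;> by_cases hj : j = b <;> simp [hi, hj]
  simp_rw [h1, Finset.sum_sub_distrib, Finset.sum_ite_eq' Finset.univ b, Finset.mem_univ,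
    if_true, Finset.sum_ite_eq' Finset.univ a]
  simp

lemma abs_pow_eq {z : ℂ} {m : ℕ} :
    (((‖z‖ : ℝ) : ℂ)) ^ (2*m) = (z * (starRingEnd ℂ) z) ^ m := by
  rw [pow_mul]
  congr 1
  rw [← Complex.ofReal_pow, Complex.sq_norm, Complex.mul_conj]

lemma key_eq {n m : ℕ} (A : (Fin (m+1) → Fin n) → (Fin (m+1) → Fin n) → ℂ)
    (lam : ℂ) (x : Fin n → ℂ) (h : IsHhatEigenpair A lam x) (p : Fin n) :
    ∑ i : Fin m → Fin n, ∑ j : Fin (m+1) → Fin n,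
      (if i = (fun _ => p) ∧ j = (fun _ => p) then 0
       else A (Fin.cons p i) j * (∏ k, x (i k)) * ∏ k, (starRingEnd ℂ) (x (j k)))
      = (lam - diagEntry A p) * (x p) ^ m * ((starRingEnd ℂ) (x p)) ^ (m+1) := by
  rw [sum_split (fun i j => A (Fin.cons p i) j * (∏ k, x (i k)) * ∏ k, (starRingEnd ℂ) (x (j k)))
    (fun _ => p) (fun _ => p), h.2 p]
  rw [abs_pow_eq, cons_const]
  simp only [Finset.prod_const, Finset.card_univ, Fintype.card_fin]
  rw [show A (fun _ => p) (fun _ => p) = diagEntry A p from rfl]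
  ring

lemma rHat_eq {n m : ℕ} (A : (Fin (m+1) → Fin n) → (Fin (m+1) → Fin n) → ℂ) (p : Fin n) :
    rHat A p = ∑ i : Fin m → Fin n, ∑ j : Fin (m+1) → Fin n,
      (if i = (fun _ => p) ∧ j = (fun _ => p) then 0
       else if (∀ k, i k ≠ p) ∧ (∀ k, j k ≠ p) then 0
       else ‖A (Fin.cons p i) j‖) := by
  unfold rHat rOff rPrime
  rw [← Finset.sum_sub_distrib]
  refine Finset.sum_congr rfl fun i _ => ?_
  rw [← Finset.sum_sub_distrib]
  refine Finset.sum_congr rfl fun j _ => ?_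
  split_ifs with h1 h2 h3
  · exact absurd (h2.2 0) (by simp [h1.2])
  · simp
  · simp
  · simp

lemma rOff_nonneg {n m : ℕ} (A : (Fin (m+1) → Fin n) → (Fin (m+1) → Fin n) → ℂ) (p : Fin n) :
    0 ≤ rOff A p :=
  Finset.sum_nonneg fun i _ => Finset.sum_nonneg fun j _ => by positivity

lemma rPrime_nonneg {n m : ℕ} (A : (Fin (m+1) → Fin n) → (Fin (m+1) → Fin n) → ℂ) (p : Fin n) :
    0 ≤ rPrime A p :=
  Finset.sum_nonneg fun i _ => Finset.sum_nonneg fun j _ => by positivity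

lemma prodle {n : ℕ} (x : Fin n → ℂ) (k : ℕ) (f : Fin k → Fin n) (e : ℝ) (_he : 0 ≤ e)
    (hf : ∀ l, ‖x (f l)‖ ≤ e) :
    ∏ l, ‖x (f l)‖ ≤ e ^ k := by
  calc ∏ l, ‖x (f l)‖ ≤ ∏ _l : Fin k, e :=
        Finset.prod_le_prod (fun _ _ => norm_nonneg _) (fun l _ => hf l)
    _ = e ^ k := by simp

lemma slice_ineq {n m : ℕ} (A : (Fin (m+1) → Fin n) → (Fin (m+1) → Fin n) → ℂ)
    (lam : ℂ) (x : Fin n → ℂ) (h : IsHhatEigenpair A lam x) (p : Fin n)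
    (c d : ℝ) (hd : 0 ≤ d) (hdc : d ≤ c)
    (hx : ∀ q, ‖x q‖ ≤ c) (hx' : ∀ q, q ≠ p → ‖x q‖ ≤ d) :
    ‖lam - diagEntry A p‖ * (‖x p‖) ^ (2*m+1)
      ≤ rHat A p * c ^ (2*m+1) + rPrime A p * d ^ (2*m+1) := by
  have hc : 0 ≤ c := le_trans hd hdc
  have hEm : m + (m + 1) = 2 * m + 1 := by ring
  have habs : ‖lam - diagEntry A p‖ * (‖x p‖) ^ (2*m+1)
      = ‖(lam - diagEntry A p) * (x p) ^ m * ((starRingEnd ℂ) (x p)) ^ (m+1)‖ := by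
    rw [norm_mul, norm_mul, norm_pow, norm_pow, Complex.norm_conj, mul_assoc, ← pow_add, hEm]
  rw [habs, ← key_eq A lam x h p]
  calc ‖∑ i : Fin m → Fin n, ∑ j : Fin (m+1) → Fin n,
        (if i = (fun _ => p) ∧ j = (fun _ => p) then 0
         else A (Fin.cons p i) j * (∏ k, x (i k)) * ∏ k, (starRingEnd ℂ) (x (j k)))‖
      ≤ ∑ i : Fin m → Fin n, ∑ j : Fin (m+1) → Fin n,
        ‖if i = (fun _ => p) ∧ j = (fun _ => p) then 0
         else A (Fin.cons p i) j * (∏ k, x (i k)) * ∏ k, (starRingEnd ℂ) (x (j k))‖ := by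
        refine le_trans (norm_sum_le _ _) (Finset.sum_le_sum fun i _ => ?_)
        exact norm_sum_le _ _
    _ ≤ ∑ i : Fin m → Fin n, ∑ j : Fin (m+1) → Fin n,
        (if i = (fun _ => p) ∧ j = (fun _ => p) then 0
         else if (∀ k, i k ≠ p) ∧ (∀ k, j k ≠ p)
           then ‖A (Fin.cons p i) j‖ * d ^ (2*m+1)
           else ‖A (Fin.cons p i) j‖ * c ^ (2*m+1)) := by
        refine Finset.sum_le_sum fun i _ => Finset.sum_le_sum fun j _ => ?_
        split_ifs with h1 h2
        · simp
        · rw [norm_mul, norm_mul, norm_prod, norm_prod]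
          simp_rw [Complex.norm_conj]
          have p1 := prodle x m i d hd (fun l => hx' (i l) (h2.1 l))
          have p2 := prodle x (m+1) j d hd (fun l => hx' (j l) (h2.2 l))
          calc ‖A (Fin.cons p i) j‖ * (∏ k, ‖x (i k)‖)
                * ∏ k, ‖x (j k)‖
              ≤ ‖A (Fin.cons p i) j‖ * d ^ m * d ^ (m+1) := by
                refine mul_le_mul (mul_le_mul le_rfl p1 (Finset.prod_nonneg fun _ _ =>
                  norm_nonneg _) (norm_nonneg _)) p2
                  (Finset.prod_nonneg fun _ _ => norm_nonneg _) (by positivity)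
            _ = ‖A (Fin.cons p i) j‖ * d ^ (2*m+1) := by
                rw [mul_assoc, ← pow_add, hEm]
        · rw [norm_mul, norm_mul, norm_prod, norm_prod]
          simp_rw [Complex.norm_conj]
          have p1 := prodle x m i c hc (fun l => hx (i l))
          have p2 := prodle x (m+1) j c hc (fun l => hx (j l))
          calc ‖A (Fin.cons p i) j‖ * (∏ k, ‖x (i k)‖)
                * ∏ k, ‖x (j k)‖
              ≤ ‖A (Fin.cons p i) j‖ * c ^ m * c ^ (m+1) := by
                refine mul_le_mul (mul_le_mul le_rfl p1 (Finset.prod_nonneg fun _ _ =>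
                  norm_nonneg _) (norm_nonneg _)) p2
                  (Finset.prod_nonneg fun _ _ => norm_nonneg _) (by positivity)
            _ = ‖A (Fin.cons p i) j‖ * c ^ (2*m+1) := by
                rw [mul_assoc, ← pow_add, hEm]
    _ = rHat A p * c ^ (2*m+1) + rPrime A p * d ^ (2*m+1) := by
        have key : ∀ (i : Fin m → Fin n) (j : Fin (m+1) → Fin n),
            (if i = (fun _ => p) ∧ j = (fun _ => p) then 0
             else if (∀ k, i k ≠ p) ∧ (∀ k, j k ≠ p)
               then ‖A (Fin.cons p i) j‖ * d ^ (2*m+1)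
               else ‖A (Fin.cons p i) j‖ * c ^ (2*m+1))
            = (if i = (fun _ => p) ∧ j = (fun _ => p) then 0
               else if (∀ k, i k ≠ p) ∧ (∀ k, j k ≠ p) then 0
               else ‖A (Fin.cons p i) j‖) * c ^ (2*m+1)
              + (if (∀ k, i k ≠ p) ∧ (∀ k, j k ≠ p)
                  then ‖A (Fin.cons p i) j‖ else 0) * d ^ (2*m+1) := by
          intro i j
          split_ifs with h1 h2
          · exact absurd (h2.2 0) (by simp [h1.2])
          · simp
          · simp
          · simp
        simp_rw [key, Finset.sum_add_distrib, ← Finset.sum_mul]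
        rw [← rHat_eq]
        rfl

theorem hhat_eigenvalue_in_ll {n m : ℕ} (hn : 1 < n)
    (A : (Fin (m+1) → Fin n) → (Fin (m+1) → Fin n) → ℂ)
    (lam : ℂ) (x : Fin n → ℂ) (h : IsHhatEigenpair A lam x) :
    ∃ t s : Fin n, t ≠ s ∧
      (‖lam - diagEntry A t‖ - rHat A t) * ‖lam - diagEntry A s‖
        ≤ rPrime A t * rOff A s := by
  haveI : Nonempty (Fin n) := ⟨⟨0, by omega⟩⟩
  obtain ⟨t, -, ht⟩ := Finset.exists_max_image (Finset.univ : Finset (Fin n))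
    (fun q => ‖x q‖) Finset.univ_nonempty
  have ht' : ∀ q, ‖x q‖ ≤ ‖x t‖ := fun q => ht q (Finset.mem_univ q)
  have hne : (Finset.univ.erase t).Nonempty := by
    rw [← Finset.card_pos, Finset.card_erase_of_mem (Finset.mem_univ t), Finset.card_univ,
      Fintype.card_fin]
    omega
  obtain ⟨s, hsmem, hs⟩ := Finset.exists_max_image _ (fun q => ‖x q‖) hne
  have hst : s ≠ t := (Finset.mem_erase.mp hsmem).1
  have hs' : ∀ q, q ≠ t → ‖x q‖ ≤ ‖x s‖ := fun q hq =>
    hs q (Finset.mem_erase.mpr ⟨hq, Finset.mem_univ q⟩)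
  set M := ‖x t‖ with hMdef
  set N := ‖x s‖ with hNdef
  have hM : 0 < M := by
    obtain ⟨q, hq⟩ := Function.ne_iff.mp h.1
    have hq' : x q ≠ 0 := by simpa using hq
    have := ht' q
    have := norm_pos_iff.mpr hq'
    linarith
  have hNM : N ≤ M := ht' s
  have hN : 0 ≤ N := norm_nonneg _
  set E := 2*m+1 with hEdef
  have I1 := slice_ineq A lam x h t M N hN hNM ht' hs'
  have I2 := slice_ineq A lam x h s M M hM.le le_rfl ht' (fun q _ => ht' q)
  refine ⟨t, s, Ne.symm hst, ?_⟩
  set a := ‖lam - diagEntry A t‖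
  set b := ‖lam - diagEntry A s‖
  set rh := rHat A t
  set rp := rPrime A t
  have hrp : 0 ≤ rp := rPrime_nonneg A t
  have hrs : 0 ≤ rOff A s := rOff_nonneg A s
  have hb : 0 ≤ b := norm_nonneg _
  have I2' : b * N ^ E ≤ rOff A s * M ^ E := by
    have hq : rHat A s * M ^ E + rPrime A s * M ^ E = rOff A s * M ^ E := by
      unfold rHat; ring
    linarith
  by_cases hcase : a - rh ≤ 0
  · exact le_trans (mul_nonpos_of_nonpos_of_nonneg hcase hb) (mul_nonneg hrp hrs)
  · push_neg at hcase
    have hPpos : 0 < M ^ E := pow_pos hM _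
    have hI1' : (a - rh) * M ^ E ≤ rp * N ^ E := by linarith
    have hQpos : 0 < N ^ E := by
      nlinarith [mul_pos hcase hPpos, pow_nonneg hN E]
    have hmul := mul_le_mul hI1' I2' (mul_nonneg hb hQpos.le)
      (mul_nonneg hrp hQpos.le)
    nlinarith [mul_pos hPpos hQpos, hmul]
end

section
/- Let A be a 2m-th order n-dimensional Hermitian tensor that is conjugate partial-symmetric (CPS). If A is strictly diagonally dominated, i.e. for every i, a_{i...iī...ī} > r_i(A) where r_i(A) is the sum of moduli of all off-diagonal entries of the i-th slice, then A is Hermitian positive definite: f(A)(x) > 0 for every nonzero x ∈ ℂⁿ. -/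
open Complex Finset

-- =====================  auxiliary lemmas  =====================

lemma amgm_aux {ι : Type*} [Fintype ι] (hc : 0 < Fintype.card ι) (a : ι → ℝ)
    (ha : ∀ t, 0 ≤ a t) :
    ∏ t, a t ≤ (∑ t, a t ^ (Fintype.card ι)) / (Fintype.card ι) := by
  set M := Fintype.card ι with hM
  have hM0 : (M : ℝ) ≠ 0 := Nat.cast_ne_zero.mpr hc.ne'
  have h := Real.geom_mean_le_arith_mean_weighted Finset.univ (fun _ => (M : ℝ)⁻¹)
      (fun t => a t ^ M) (fun _ _ => by positivity)
      (by simp [Finset.card_univ, ← hM, mul_inv_cancel₀ hM0])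
      (fun t _ => pow_nonneg (ha t) M)
  have hl : ∀ t : ι, (a t ^ M) ^ ((M : ℝ)⁻¹) = a t := by
    intro t
    rw [← Real.rpow_natCast (a t) M, ← Real.rpow_mul (ha t),
      mul_inv_cancel₀ hM0, Real.rpow_one]
  calc ∏ t, a t = ∏ t, (a t ^ M) ^ ((M : ℝ)⁻¹) := by simp [hl]
    _ ≤ ∑ t, (M : ℝ)⁻¹ * a t ^ M := h
    _ = (∑ t, a t ^ M) / M := by rw [← Finset.mul_sum, div_eq_inv_mul]

/-- The "diagonal pair" predicate. -/
def DiagPair {n m : ℕ} (i j : Fin m → Fin n) : Prop :=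
  ∃ q : Fin n, i = (fun _ => q) ∧ j = (fun _ => q)

instance {n m : ℕ} (i j : Fin m → Fin n) : Decidable (DiagPair i j) := by
  unfold DiagPair; infer_instance

lemma diagPair_comm {n m : ℕ} (i j : Fin m → Fin n) : DiagPair i j ↔ DiagPair j i := by
  constructor <;> rintro ⟨q, h1, h2⟩ <;> exact ⟨q, h2, h1⟩

lemma comp_const_iff {n m : ℕ} (i : Fin m → Fin n) (σ : Equiv.Perm (Fin m)) (q : Fin n) :
    i ∘ σ = (fun _ => q) ↔ i = (fun _ => q) := by
  constructor
  · intro h; funext t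
    have := congrFun h (σ.symm t)
    simpa using this
  · intro h; subst h; rfl

lemma diagPair_comp_left {n m : ℕ} (i j : Fin m → Fin n) (σ : Equiv.Perm (Fin m)) :
    DiagPair (i ∘ σ) j ↔ DiagPair i j := by
  unfold DiagPair
  exact exists_congr fun q => and_congr_left' (comp_const_iff i σ q)

lemma diagPair_cons {n m : ℕ} (q : Fin n) (i : Fin m → Fin n) (j : Fin (m+1) → Fin n) :
    DiagPair (Fin.cons q i) j ↔ (i = (fun _ => q) ∧ j = (fun _ => q)) := by
  constructor
  · rintro ⟨q', h1, h2⟩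
    have hq : q = q' := by simpa using congrFun h1 0
    subst hq
    refine ⟨?_, h2⟩
    funext t
    simpa using congrFun h1 t.succ
  · rintro ⟨h1, h2⟩
    exact ⟨q, by subst h1; funext t; exact Fin.cases rfl (fun t => rfl) t, h2⟩

/-- Sum over diagonal pairs. -/
lemma sum_diagPair {n m : ℕ} (c : (Fin (m+1) → Fin n) → (Fin (m+1) → Fin n) → ℝ) :
    (∑ i : Fin (m+1) → Fin n, ∑ j : Fin (m+1) → Fin n,
      if DiagPair i j then c i j else 0)
      = ∑ q : Fin n, c (fun _ => q) (fun _ => q) := by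
  have step : ∀ (i j : Fin (m+1) → Fin n),
      (if DiagPair i j then c i j else 0)
        = ∑ q : Fin n, if i = (fun _ => q) then (if j = (fun _ => q) then c i j else 0) else 0 := by
    intro i j
    by_cases h : DiagPair i j
    · obtain ⟨q, rfl, rfl⟩ := h
      rw [if_pos ⟨q, rfl, rfl⟩, Finset.sum_eq_single q]
      · simp
      · intro q' _ hq'
        refine if_neg fun hc => hq'.symm (congrFun hc 0)
      · simp
    · rw [if_neg h, eq_comm]
      apply Finset.sum_eq_zero
      intro q _
      by_cases h1 : i = fun _ => q
      · by_cases h2 : j = fun _ => q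
        · exact absurd ⟨q, h1, h2⟩ h
        · rw [if_pos h1, if_neg h2]
      · rw [if_neg h1]
  simp_rw [step]
  have swap1 : ∀ i : Fin (m+1) → Fin n,
      (∑ j : Fin (m+1) → Fin n, ∑ q : Fin n,
        if i = (fun _ => q) then (if j = (fun _ => q) then c i j else 0) else 0)
      = ∑ q : Fin n, ∑ j : Fin (m+1) → Fin n,
        if i = (fun _ => q) then (if j = (fun _ => q) then c i j else 0) else 0 :=
    fun i => Finset.sum_comm
  simp_rw [swap1]
  rw [Finset.sum_comm]
  refine Finset.sum_congr rfl fun q _ => ?_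
  have inner : ∀ i : Fin (m+1) → Fin n,
      (∑ j : Fin (m+1) → Fin n,
        if i = (fun _ => q) then (if j = (fun _ => q) then c i j else 0) else 0)
      = if i = (fun _ => q) then c i (fun _ => q) else 0 := by
    intro i
    by_cases h1 : i = fun _ => q
    · simp only [if_pos h1]
      rw [Finset.sum_ite_eq' Finset.univ (fun _ => q) (c i), if_pos (Finset.mem_univ _)]
    · simp [h1]
  simp_rw [inner]
  rw [Finset.sum_ite_eq' Finset.univ (fun _ => q) (fun i => c i (fun _ => q)),
    if_pos (Finset.mem_univ _)]

lemma sum_reindex_perm {n m : ℕ} (σ : Equiv.Perm (Fin m)) (G : (Fin m → Fin n) → ℝ) :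
    ∑ i : Fin m → Fin n, G (i ∘ σ) = ∑ i : Fin m → Fin n, G i :=
  Fintype.sum_equiv (Equiv.arrowCongr σ.symm (Equiv.refl (Fin n)))
    (fun i => G (i ∘ σ)) G (fun _ => rfl)

lemma sum_cons_split {n m : ℕ} (G : (Fin (m+1) → Fin n) → ℝ) :
    ∑ i : Fin (m+1) → Fin n, G i
      = ∑ q : Fin n, ∑ i' : Fin m → Fin n, G (Fin.cons q i') := by
  rw [← Fintype.sum_prod_type']
  exact (Fintype.sum_equiv (Fin.consEquiv (fun _ => Fin n))
    (fun p => G (Fin.cons p.1 p.2)) G (fun p => rfl)).symm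

set_option maxHeartbeats 1000000

lemma posSum {n m : ℕ} (A : (Fin (m+1) → Fin n) → (Fin (m+1) → Fin n) → ℂ)
    (x : Fin n → ℂ) (M : ℕ)
    (hA : ∀ (i j : Fin (m+1) → Fin n) (σ : Equiv.Perm (Fin (m+1))),
      ‖A (i ∘ σ) j‖ = ‖A i j‖)
    (k : Fin (m+1)) :
    (∑ i : Fin (m+1) → Fin n, ∑ j : Fin (m+1) → Fin n,
      if DiagPair i j then 0 else ‖A i j‖ * (‖x (i k)‖)^M)
    = ∑ q : Fin n, rOff A q * (‖x q‖)^M := by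
  set σ : Equiv.Perm (Fin (m+1)) := Equiv.swap 0 k with hσ
  have hσk : σ k = 0 := Equiv.swap_apply_right 0 k
  calc (∑ i : Fin (m+1) → Fin n, ∑ j : Fin (m+1) → Fin n,
          if DiagPair i j then 0 else ‖A i j‖ * (‖x (i k)‖)^M)
      = ∑ i : Fin (m+1) → Fin n, ∑ j : Fin (m+1) → Fin n,
          if DiagPair (i ∘ σ) j then 0
          else ‖A (i ∘ σ) j‖ * (‖x ((i ∘ σ) k)‖)^M := by
        exact (sum_reindex_perm σ (fun i => ∑ j : Fin (m+1) → Fin n,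
          if DiagPair i j then 0
          else ‖A i j‖ * (‖x (i k)‖)^M)).symm
    _ = ∑ i : Fin (m+1) → Fin n, ∑ j : Fin (m+1) → Fin n,
          if DiagPair i j then 0
          else ‖A i j‖ * (‖x (i 0)‖)^M := by
        refine Finset.sum_congr rfl fun i _ => Finset.sum_congr rfl fun j _ => ?_
        have h2 : (i ∘ σ) k = i 0 := by
          show i (σ k) = i 0
          rw [hσk]
        rw [if_congr (diagPair_comp_left i j σ) rfl (by rw [hA i j σ, h2])]
    _ = ∑ q : Fin n, ∑ i' : Fin m → Fin n, ∑ j : Fin (m+1) → Fin n,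
          if DiagPair ((Fin.cons q i' : Fin (m+1) → Fin n)) j then 0
          else ‖A (Fin.cons q i') j‖
            * (‖x ((Fin.cons q i' : Fin (m+1) → Fin n) 0)‖)^M :=
        sum_cons_split (fun i => ∑ j : Fin (m+1) → Fin n,
          if DiagPair i j then 0
          else ‖A i j‖ * (‖x (i 0)‖)^M)
    _ = ∑ q : Fin n, rOff A q * (‖x q‖)^M := by
        refine Finset.sum_congr rfl fun q _ => ?_
        rw [rOff, Finset.sum_mul]
        refine Finset.sum_congr rfl fun i' _ => ?_
        rw [Finset.sum_mul]
        refine Finset.sum_congr rfl fun j _ => ?_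
        rw [Fin.cons_zero]
        by_cases h : i' = (fun _ => q) ∧ j = (fun _ => q)
        · rw [if_pos ((diagPair_cons q i' j).mpr h), if_pos h, zero_mul]
        · rw [if_neg (fun hd => h ((diagPair_cons q i' j).mp hd)), if_neg h]

lemma posSum' {n m : ℕ} (A : (Fin (m+1) → Fin n) → (Fin (m+1) → Fin n) → ℂ)
    (x : Fin n → ℂ) (M : ℕ)
    (hA : ∀ (i j : Fin (m+1) → Fin n) (σ : Equiv.Perm (Fin (m+1))),
      ‖A (i ∘ σ) j‖ = ‖A i j‖)
    (hA2 : ∀ i j, ‖A j i‖ = ‖A i j‖)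
    (k : Fin (m+1)) :
    (∑ i : Fin (m+1) → Fin n, ∑ j : Fin (m+1) → Fin n,
      if DiagPair i j then 0 else ‖A i j‖ * (‖x (j k)‖)^M)
    = ∑ q : Fin n, rOff A q * (‖x q‖)^M := by
  rw [Finset.sum_comm]
  have : ∀ a b : Fin (m+1) → Fin n,
      (if DiagPair b a then 0 else ‖A b a‖ * (‖x (a k)‖)^M)
      = (if DiagPair a b then 0 else ‖A a b‖ * (‖x (a k)‖)^M) := by
    intro a b
    rw [hA2 a b, if_congr (diagPair_comm b a) rfl rfl]
  simp_rw [this]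
  exact posSum A x M hA k

lemma fpoly_real {n m : ℕ} (A : (Fin m → Fin n) → (Fin m → Fin n) → ℂ)
    (hA : IsHermitianTensor A) (x : Fin n → ℂ) :
    ((fpoly A x).re : ℂ) = fpoly A x := by
  rw [← Complex.conj_eq_iff_re]
  calc (starRingEnd ℂ) (fpoly A x)
      = ∑ i : Fin m → Fin n, ∑ j : Fin m → Fin n, (starRingEnd ℂ)
          (A i j * (∏ k, x (i k)) * ∏ k, (starRingEnd ℂ) (x (j k))) := by
        rw [fpoly, map_sum]
        exact Finset.sum_congr rfl fun i _ => map_sum _ _ _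
    _ = ∑ i : Fin m → Fin n, ∑ j : Fin m → Fin n,
          A j i * (∏ k, x (j k)) * ∏ k, (starRingEnd ℂ) (x (i k)) := by
        refine Finset.sum_congr rfl fun i _ => Finset.sum_congr rfl fun j _ => ?_
        rw [map_mul, map_mul, map_prod, map_prod, hA i j]
        simp only [Complex.conj_conj]
        ring
    _ = fpoly A x := by rw [fpoly]; exact Finset.sum_comm

theorem strictly_diag_dominated_cps_is_hermitianPD {n m : ℕ}
    (A : (Fin (m+1) → Fin n) → (Fin (m+1) → Fin n) → ℂ)
    (hcps : IsCPS A)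
    (hdd : ∀ p : Fin n, rOff A p < (diagEntry A p).re) :
    HermitianPD A :=  by
  classical
  obtain ⟨hherm, hperm⟩ := hcps
  have habs : ∀ (i j : Fin (m+1) → Fin n) (σ : Equiv.Perm (Fin (m+1))),
      ‖A (i ∘ σ) j‖ = ‖A i j‖ := by
    intro i j σ
    have h1 : j ∘ ⇑(1 : Equiv.Perm (Fin (m+1))) = j := funext fun t => rfl
    have := hperm i j σ 1
    rw [h1] at this
    rw [this]
  have habs2 : ∀ i j, ‖A j i‖ = ‖A i j‖ := fun i j => by
    rw [← hherm i j, Complex.norm_conj]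
  intro x hx
  refine ⟨(fpoly A x).re, (fpoly_real A hherm x).symm, ?_⟩
  set M : ℕ := 2 * (m + 1) with hMdef
  have hMpos : 0 < (M : ℝ) := by positivity
  set g : (Fin (m+1) → Fin n) → ℝ := fun v => ∏ k, ‖x (v k)‖ with hg
  have hcard : Fintype.card (Fin (m+1) ⊕ Fin (m+1)) = M := by
    simp [hMdef]; ring
  have amgm : ∀ i j : Fin (m+1) → Fin n, g i * g j ≤
      ((∑ k, (‖x (i k)‖)^M) + ∑ k, (‖x (j k)‖)^M) / M := by
    intro i j
    have h := amgm_aux (ι := Fin (m+1) ⊕ Fin (m+1)) (by rw [hcard]; positivity)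
      (Sum.elim (fun k => ‖x (i k)‖) (fun k => ‖x (j k)‖))
      (by rintro (t|t) <;> exact norm_nonneg _)
    rw [Fintype.prod_sum_type, Fintype.sum_sum_type, hcard] at h
    exact h
  have hTabs : ∀ i j : Fin (m+1) → Fin n,
      ‖A i j * (∏ k, x (i k)) * ∏ k, (starRingEnd ℂ) (x (j k))‖
        = ‖A i j‖ * (g i * g j) := by
    intro i j
    rw [norm_mul, norm_mul, norm_prod, norm_prod, mul_assoc]
    congr 1
    congr 1
    exact Finset.prod_congr rfl fun k _ => Complex.norm_conj _
  have diag_re : ∀ q : Fin n,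
      (A (fun _ => q) (fun _ => q) * (∏ _k : Fin (m+1), x ((fun _ : Fin (m+1) => q) _k))
        * ∏ _k : Fin (m+1), (starRingEnd ℂ) (x ((fun _ : Fin (m+1) => q) _k))).re
      = (diagEntry A q).re * (‖x q‖)^M := by
    intro q
    have hprod : (∏ _k : Fin (m+1), x q) * ∏ _k : Fin (m+1), (starRingEnd ℂ) (x q)
        = (((‖x q‖)^M : ℝ) : ℂ) := by
      rw [Finset.prod_const, Finset.prod_const, Finset.card_univ, Fintype.card_fin,
        ← mul_pow, Complex.mul_conj, ← Complex.sq_norm, hMdef]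
      push_cast
      ring
    rw [mul_assoc, hprod, mul_comm, Complex.re_ofReal_mul, diagEntry]
    ring
  -- The off–diagonal sum
  set S : ℝ := ∑ i : Fin (m+1) → Fin n, ∑ j : Fin (m+1) → Fin n,
      (if DiagPair i j then 0 else ‖A i j‖ * (g i * g j)) with hS
  have hstep1 : ∑ q : Fin n, (diagEntry A q).re * (‖x q‖)^M - S
      ≤ (fpoly A x).re := by
    have hre : (fpoly A x).re = ∑ i : Fin (m+1) → Fin n, ∑ j : Fin (m+1) → Fin n,
        (A i j * (∏ k, x (i k)) * ∏ k, (starRingEnd ℂ) (x (j k))).re := by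
      rw [fpoly, Complex.re_sum]
      exact Finset.sum_congr rfl fun i _ => Complex.re_sum _ _
    have hsplit : ∑ q : Fin n, (diagEntry A q).re * (‖x q‖)^M - S
        = ∑ i : Fin (m+1) → Fin n, ∑ j : Fin (m+1) → Fin n,
          (if DiagPair i j
            then (A i j * (∏ k, x (i k)) * ∏ k, (starRingEnd ℂ) (x (j k))).re
            else -(‖A i j‖ * (g i * g j))) := by
      have expand : ∀ i j : Fin (m+1) → Fin n,
          (if DiagPair i j
            then (A i j * (∏ k, x (i k)) * ∏ k, (starRingEnd ℂ) (x (j k))).re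
            else -(‖A i j‖ * (g i * g j)))
          = (if DiagPair i j
              then (A i j * (∏ k, x (i k)) * ∏ k, (starRingEnd ℂ) (x (j k))).re
              else 0)
            - (if DiagPair i j then 0 else ‖A i j‖ * (g i * g j)) := by
        intro i j
        by_cases h : DiagPair i j <;> simp [h]
      simp_rw [expand, Finset.sum_sub_distrib]
      rw [sum_diagPair (fun i j =>
        (A i j * (∏ k, x (i k)) * ∏ k, (starRingEnd ℂ) (x (j k))).re), ← hS]
      congr 1
      exact Finset.sum_congr rfl fun q _ => (diag_re q).symm
    rw [hsplit, hre]
    refine Finset.sum_le_sum fun i _ => Finset.sum_le_sum fun j _ => ?_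
    by_cases h : DiagPair i j
    · rw [if_pos h]
    · rw [if_neg h, ← hTabs i j]
      exact (abs_le.mp (Complex.abs_re_le_norm _)).1
  have hstep2 : S ≤ ∑ q : Fin n, rOff A q * (‖x q‖)^M := by
    have hb : S ≤ ∑ i : Fin (m+1) → Fin n, ∑ j : Fin (m+1) → Fin n,
        ((∑ k, (if DiagPair i j then 0
            else ‖A i j‖ * (‖x (i k)‖)^M))
          + ∑ k, (if DiagPair i j then 0
            else ‖A i j‖ * (‖x (j k)‖)^M)) / M := by
      rw [hS]
      refine Finset.sum_le_sum fun i _ => Finset.sum_le_sum fun j _ => ?_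
      by_cases h : DiagPair i j
      · simp [h]
      · simp only [if_neg h]
        calc ‖A i j‖ * (g i * g j)
            ≤ ‖A i j‖ *
              (((∑ k, (‖x (i k)‖)^M) + ∑ k, (‖x (j k)‖)^M) / M) :=
              mul_le_mul_of_nonneg_left (amgm i j) (norm_nonneg _)
          _ = ((∑ k, ‖A i j‖ * (‖x (i k)‖)^M)
              + ∑ k, ‖A i j‖ * (‖x (j k)‖)^M) / M := by
              rw [← Finset.mul_sum, ← Finset.mul_sum, ← mul_add, mul_div_assoc]
    refine hb.trans (le_of_eq ?_)
    have swapk : ∀ (F : (Fin (m+1) → Fin n) → (Fin (m+1) → Fin n) → Fin (m+1) → ℝ),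
        (∑ i : Fin (m+1) → Fin n, ∑ j : Fin (m+1) → Fin n, ∑ k, F i j k)
        = ∑ k, ∑ i : Fin (m+1) → Fin n, ∑ j : Fin (m+1) → Fin n, F i j k := by
      intro F
      calc ∑ i : Fin (m+1) → Fin n, ∑ j : Fin (m+1) → Fin n, ∑ k, F i j k
          = ∑ i : Fin (m+1) → Fin n, ∑ k, ∑ j : Fin (m+1) → Fin n, F i j k :=
            Finset.sum_congr rfl fun i _ => Finset.sum_comm
        _ = ∑ k, ∑ i : Fin (m+1) → Fin n, ∑ j : Fin (m+1) → Fin n, F i j k :=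
            Finset.sum_comm
    calc (∑ i : Fin (m+1) → Fin n, ∑ j : Fin (m+1) → Fin n,
          ((∑ k, (if DiagPair i j then 0
              else ‖A i j‖ * (‖x (i k)‖)^M))
            + ∑ k, (if DiagPair i j then 0
              else ‖A i j‖ * (‖x (j k)‖)^M)) / M)
        = ((∑ k : Fin (m+1), ∑ i : Fin (m+1) → Fin n, ∑ j : Fin (m+1) → Fin n,
            (if DiagPair i j then 0
              else ‖A i j‖ * (‖x (i k)‖)^M))
          + ∑ k : Fin (m+1), ∑ i : Fin (m+1) → Fin n, ∑ j : Fin (m+1) → Fin n,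
            (if DiagPair i j then 0
              else ‖A i j‖ * (‖x (j k)‖)^M)) / M := by
          simp_rw [← Finset.sum_div, Finset.sum_add_distrib]
          rw [swapk (fun i j k => if DiagPair i j then 0
              else ‖A i j‖ * (‖x (i k)‖)^M),
            swapk (fun i j k => if DiagPair i j then 0
              else ‖A i j‖ * (‖x (j k)‖)^M)]
      _ = ((m+1 : ℕ) • (∑ q : Fin n, rOff A q * (‖x q‖)^M)
          + (m+1 : ℕ) • (∑ q : Fin n, rOff A q * (‖x q‖)^M)) / M := by
          congr 1
          congr 1
          · rw [Finset.sum_congr rfl (fun k _ => posSum A x M habs k), Finset.sum_const,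
              Finset.card_univ, Fintype.card_fin]
          · rw [Finset.sum_congr rfl (fun k _ => posSum' A x M habs habs2 k), Finset.sum_const,
              Finset.card_univ, Fintype.card_fin]
      _ = ∑ q : Fin n, rOff A q * (‖x q‖)^M := by
          have hm1 : ((m : ℝ) + 1) ≠ 0 := by positivity
          rw [nsmul_eq_mul, hMdef]
          push_cast
          field_simp
          ring
  have hfinal : 0 < ∑ q : Fin n, ((diagEntry A q).re - rOff A q) * (‖x q‖)^M := by
    obtain ⟨q0, hq0⟩ : ∃ q, x q ≠ 0 := by
      by_contra h
      push_neg at h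
      exact hx (funext h)
    refine Finset.sum_pos' (fun q _ => mul_nonneg (sub_nonneg.mpr (hdd q).le)
      (pow_nonneg (norm_nonneg _) M)) ⟨q0, Finset.mem_univ _, ?_⟩
    exact mul_pos (sub_pos.mpr (hdd q0)) (pow_pos (norm_pos_iff.mpr hq0) M)
  have : ∑ q : Fin n, ((diagEntry A q).re - rOff A q) * (‖x q‖)^M
      ≤ (fpoly A x).re := by
    refine le_trans ?_ hstep1
    have : ∑ q : Fin n, ((diagEntry A q).re - rOff A q) * (‖x q‖)^M
        = ∑ q : Fin n, (diagEntry A q).re * (‖x q‖)^M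
          - ∑ q : Fin n, rOff A q * (‖x q‖)^M := by
      rw [← Finset.sum_sub_distrib]
      exact Finset.sum_congr rfl fun q _ => by ring
    rw [this]
    linarith [hstep2]
  linarith [hfinal, this]
end
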